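/- Let U, V be manifolds, φ : U → V a smooth map, F a C^∞(V)-submodule of 𝔛_c(V), and 𝒢 a generating set for F. Assume that every Y ∈ F admits a smooth vector field Z on U that is φ-related to Y. Then the pullback module φ^{-1}(F) equals the set of finite C_c^∞(U)-linear combinations of smooth vector fields Z on U each of which is either φ-related to some element of 𝒢 or φ-related to the zero vector field on V. -/

import Mathlib

open Manifold Topology Function Set

noncomputable section

/-- Rough vector fields on a manifold `M`: sections of the tangent bundle. -/
abbrev VectorFieldOn {E H : Type*} [NormedAddCommGroup E] [NormedSpace ℝ E]
    [TopologicalSpace H] (I : ModelWithCorners ℝ E H)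
    (M : Type*) [TopologicalSpace M] [ChartedSpace H M] : Type _ :=
  ∀ x : M, TangentSpace I x

section Defs

variable {E H : Type*} [NormedAddCommGroup E] [NormedSpace ℝ E] [TopologicalSpace H]
  (I : ModelWithCorners ℝ E H)
  {M : Type*} [TopologicalSpace M] [ChartedSpace H M] [IsManifold I (⊤ : ℕ∞) M]

/-- A vector field is smooth iff it is a smooth section of the tangent bundle. -/
def IsSmoothVF (X : VectorFieldOn I M) : Prop :=
  ContMDiff I I.tangent (⊤ : ℕ∞) (fun x => (⟨x, X x⟩ : TangentBundle I M))

/-- A vector field is smooth on a subset `O` iff the corresponding section of the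
tangent bundle is smooth on `O`. -/
def IsSmoothVFOn (X : VectorFieldOn I M) (O : Set M) : Prop :=
  ContMDiffOn I I.tangent (⊤ : ℕ∞) (fun x => (⟨x, X x⟩ : TangentBundle I M)) O

/-- The support of a vector field: the closure of the set where it is nonzero. -/
def suppVF (X : VectorFieldOn I M) : Set M := closure {x : M | X x ≠ 0}

/-- A vector field is compactly supported iff its support is compact. -/
def IsCptSuppVF (X : VectorFieldOn I M) : Prop := IsCompact (suppVF I X)

/-- A real valued function on a manifold is smooth. -/
def IsSmoothFn (f : M → ℝ) : Prop := ContMDiff I 𝓘(ℝ) (⊤ : ℕ∞) f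

/-- `f ∈ C_c^∞(M)`: `f` is smooth and compactly supported. -/
def IsCcFn (f : M → ℝ) : Prop := IsSmoothFn I f ∧ HasCompactSupport f

/-- `𝔛_c(M)`: the set of compactly supported smooth vector fields on `M`. -/
def XC : Set (VectorFieldOn I M) := {X | IsSmoothVF I X ∧ IsCptSuppVF I X}

/-- `F` is a `C^∞(M)`-submodule of `𝔛_c(M)`: a set of compactly supported smooth
vector fields closed under addition and under multiplication by smooth functions. -/
structure IsCinftySubmodule (F : Set (VectorFieldOn I M)) : Prop where
  subset_XC : F ⊆ XC I
  add_mem : ∀ X ∈ F, ∀ Y ∈ F, (fun x => X x + Y x) ∈ F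
  smul_mem : ∀ f : M → ℝ, IsSmoothFn I f → ∀ X ∈ F, (fun x => f x • X x) ∈ F

/-- `X` is a finite `C_c^∞(M)`-linear combination of elements of `S`. -/
def IsCcSpan (S : Set (VectorFieldOn I M)) (X : VectorFieldOn I M) : Prop :=
  ∃ (k : ℕ) (g : Fin k → M → ℝ) (Y : Fin k → VectorFieldOn I M),
    (∀ i, IsCcFn I (g i)) ∧ (∀ i, Y i ∈ S) ∧ ∀ x, X x = ∑ i, g i x • Y i x

/-- `𝒢` is a generating set for the module `F`: the elements of `𝒢` are smooth vector
fields, `g • Y ∈ F` for every `g ∈ C_c^∞(M)` and `Y ∈ 𝒢`, and every element of `F` is a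
finite `C_c^∞(M)`-linear combination of elements of `𝒢`. -/
structure IsGeneratingSet (F 𝒢 : Set (VectorFieldOn I M)) : Prop where
  smooth : ∀ Y ∈ 𝒢, IsSmoothVF I Y
  smul_mem : ∀ g : M → ℝ, IsCcFn I g → ∀ Y ∈ 𝒢, (fun x => g x • Y x) ∈ F
  spans : ∀ X ∈ F, IsCcSpan I 𝒢 X

/-- The sum of two sets of vector fields. -/
def setAddVF (S T : Set (VectorFieldOn I M)) : Set (VectorFieldOn I M) :=
  {X | ∃ A ∈ S, ∃ B ∈ T, ∀ x, X x = A x + B x}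

/-- The module `F` is locally finitely generated: each point has an open neighbourhood
`O` carrying finitely many vector fields, smooth on `O`, such that every element of `F`
supported in `O` coincides on `O` with a `C_c^∞(O)`-linear combination of them. -/
def LocallyFinGen (F : Set (VectorFieldOn I M)) : Prop :=
  ∀ x : M, ∃ O : Set M, IsOpen O ∧ x ∈ O ∧
    ∃ (k : ℕ) (Y : Fin k → VectorFieldOn I M),
      (∀ i, IsSmoothVFOn I (Y i) O) ∧
      ∀ X ∈ F, suppVF I X ⊆ O →
        ∃ g : Fin k → M → ℝ, (∀ i, IsCcFn I (g i) ∧ tsupport (g i) ⊆ O) ∧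
          ∀ x' ∈ O, X x' = ∑ i, g i x' • Y i x'

variable {E' H' : Type*} [NormedAddCommGroup E'] [NormedSpace ℝ E'] [TopologicalSpace H']
  (I' : ModelWithCorners ℝ E' H')
  {N : Type*} [TopologicalSpace N] [ChartedSpace H' N] [IsManifold I' (⊤ : ℕ∞) N]

/-- `Z` is `φ`-related to `Y` : `dφ_u (Z u) = Y (φ u)` for all `u`. -/
def IsPhiRelated (φ : M → N) (Z : VectorFieldOn I M) (Y : VectorFieldOn I' N) : Prop :=
  ∀ u, mfderiv I I' φ u (Z u) = Y (φ u)

/-- `φ` is a submersion: its differential is surjective at every point. -/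
def IsSubmersion (φ : M → N) : Prop := ∀ u, Surjective (mfderiv I I' φ u)

/-- `Γ_c(ker dφ)`: the compactly supported smooth vector fields killed by `dφ`. -/
def KerGammaC (φ : M → N) : Set (VectorFieldOn I M) :=
  {X | X ∈ XC I ∧ ∀ u, mfderiv I I' φ u (X u) = 0}

/-- The pullback module `φ⁻¹(F)` of a module of vector fields under a smooth map. -/
def PullbackModule (φ : M → N) (F : Set (VectorFieldOn I' N)) :
    Set (VectorFieldOn I M) :=
  {X | X ∈ XC I ∧ ∃ (k : ℕ) (f : Fin k → M → ℝ) (Y : Fin k → VectorFieldOn I' N),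
    (∀ i, IsCcFn I (f i)) ∧ (∀ i, Y i ∈ F) ∧
    ∀ u, mfderiv I I' φ u (X u) = ∑ i, f i u • Y i (φ u)}

end Defs

section Lie

variable {n : ℕ} {M : Type*} [TopologicalSpace M]
  [ChartedSpace (EuclideanSpace ℝ (Fin n)) M] [IsManifold (𝓡 n) (⊤ : ℕ∞) M]

/-- The expression of a vector field in the chart around `x₀` (the pullback of `X`
under the inverse of the extended chart at `x₀`). -/
def chartPushVF (x₀ : M) (X : VectorFieldOn (𝓡 n) M)
    (v : EuclideanSpace ℝ (Fin n)) : EuclideanSpace ℝ (Fin n) :=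
  (mfderiv (𝓡 n) (𝓡 n) ((extChartAt (𝓡 n) x₀).symm) v).inverse
    (X ((extChartAt (𝓡 n) x₀).symm v))

/-- The Lie bracket of two vector fields on a manifold, computed in the chart around
the given point (as for `VectorField.mlieBracket` in Mathlib). -/
def mlie (X Y : VectorFieldOn (𝓡 n) M) : VectorFieldOn (𝓡 n) M := fun x₀ =>
  (mfderiv (𝓡 n) (𝓡 n) (extChartAt (𝓡 n) x₀) x₀).inverse
    (show TangentSpace (𝓡 n) (extChartAt (𝓡 n) x₀ x₀) from
      (VectorField.lieBracket ℝ (chartPushVF x₀ X) (chartPushVF x₀ Y)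
        (extChartAt (𝓡 n) x₀ x₀) : EuclideanSpace ℝ (Fin n)))

/-- A singular foliation on a manifold: an involutive, locally finitely generated
`C^∞(M)`-submodule of `𝔛_c(M)`. -/
structure IsSingularFoliation (F : Set (VectorFieldOn (𝓡 n) M)) : Prop where
  submodule : IsCinftySubmodule (𝓡 n) F
  involutive : ∀ X ∈ F, ∀ Y ∈ F, mlie X Y ∈ F
  locFinGen : LocallyFinGen (𝓡 n) F

end Lie

section MoreDefs

variable {E H : Type*} [NormedAddCommGroup E] [NormedSpace ℝ E] [TopologicalSpace H]
  (I : ModelWithCorners ℝ E H)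
  {M : Type*} [TopologicalSpace M] [ChartedSpace H M] [IsManifold I (⊤ : ℕ∞) M]
  {E' H' : Type*} [NormedAddCommGroup E'] [NormedSpace ℝ E'] [TopologicalSpace H']
  (I' : ModelWithCorners ℝ E' H')
  {N : Type*} [TopologicalSpace N] [ChartedSpace H' N] [IsManifold I' (⊤ : ℕ∞) N]

/-- The global hull of a module of compactly supported vector fields: the smooth vector
fields `X` such that `g • X` belongs to the module for every `g ∈ C_c^∞(M)`. -/
def GlobalHull (F : Set (VectorFieldOn I M)) : Set (VectorFieldOn I M) :=
  {X | IsSmoothVF I X ∧ ∀ g : M → ℝ, IsCcFn I g → (fun x => g x • X x) ∈ F}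

/-- `X` is `f`-projectable, with (necessarily unique, when `f` is surjective)
projection the smooth vector field `Y`. -/
def ProjectableTo (f : M → N) (X : VectorFieldOn I M) (Y : VectorFieldOn I' N) : Prop :=
  IsSmoothVF I' Y ∧ IsPhiRelated I I' f X Y

/-- The pushforward `f_*(F)`: all finite `C_c^∞(N)`-linear combinations of projections
`f_* X` of `f`-projectable elements `X` of the global hull of `F`. -/
def PushforwardModule (f : M → N) (F : Set (VectorFieldOn I M)) :
    Set (VectorFieldOn I' N) :=
  {W | IsCcSpan I' {Y | ∃ X ∈ GlobalHull I F, ProjectableTo I I' f X Y} W}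

end MoreDefs

section PairDefs

variable {n : ℕ} {M : Type*} [TopologicalSpace M]
  [ChartedSpace (EuclideanSpace ℝ (Fin n)) M] [IsManifold (𝓡 n) (⊤ : ℕ∞) M]

/-- The right-invariant extension `→X` of a vector field `X` on `M` to the pair
groupoid `M × M`, namely `(x, y) ↦ (X x, 0)`. -/
def rightInvVF (X : VectorFieldOn (𝓡 n) M) :
    VectorFieldOn ((𝓡 n).prod (𝓡 n)) (M × M) :=
  fun p => (show TangentSpace ((𝓡 n).prod (𝓡 n)) p from ((X p.1, 0) :
    EuclideanSpace ℝ (Fin n) × EuclideanSpace ℝ (Fin n)))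

/-- The left-invariant extension `←X` of a vector field `X` on `M` to the pair
groupoid `M × M`, namely `(x, y) ↦ (0, X y)`. -/
def leftInvVF (X : VectorFieldOn (𝓡 n) M) :
    VectorFieldOn ((𝓡 n).prod (𝓡 n)) (M × M) :=
  fun p => (show TangentSpace ((𝓡 n).prod (𝓡 n)) p from ((0, X p.2) :
    EuclideanSpace ℝ (Fin n) × EuclideanSpace ℝ (Fin n)))

/-- `→F`: the `C_c^∞(M × M)`-span of the vector fields `→X`, `X ∈ F`. -/
def rightInvModule (F : Set (VectorFieldOn (𝓡 n) M)) :
    Set (VectorFieldOn ((𝓡 n).prod (𝓡 n)) (M × M)) :=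
  {W | IsCcSpan ((𝓡 n).prod (𝓡 n)) {W' | ∃ X ∈ F, W' = rightInvVF X} W}

/-- `←F`: the `C_c^∞(M × M)`-span of the vector fields `←X`, `X ∈ F`. -/
def leftInvModule (F : Set (VectorFieldOn (𝓡 n) M)) :
    Set (VectorFieldOn ((𝓡 n).prod (𝓡 n)) (M × M)) :=
  {W | IsCcSpan ((𝓡 n).prod (𝓡 n)) {W' | ∃ X ∈ F, W' = leftInvVF X} W}

end PairDefs

/-- `(U, tU, sU)` is a bisubmersion for `F` in the sense of Androulidakis–Skandalis:
`tU` and `sU` are smooth submersions to `M` and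
`tU⁻¹(F) = Γ_c(ker dtU) + Γ_c(ker dsU) = sU⁻¹(F)`. -/
structure IsASBisubmersion {n k : ℕ} {M U : Type*}
    [TopologicalSpace M] [ChartedSpace (EuclideanSpace ℝ (Fin n)) M]
    [IsManifold (𝓡 n) (⊤ : ℕ∞) M]
    [TopologicalSpace U] [ChartedSpace (EuclideanSpace ℝ (Fin k)) U]
    [IsManifold (𝓡 k) (⊤ : ℕ∞) U]
    (F : Set (VectorFieldOn (𝓡 n) M)) (tU sU : U → M) : Prop where
  smooth_t : ContMDiff (𝓡 k) (𝓡 n) (⊤ : ℕ∞) tU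
  smooth_s : ContMDiff (𝓡 k) (𝓡 n) (⊤ : ℕ∞) sU
  subm_t : IsSubmersion (𝓡 k) (𝓡 n) tU
  subm_s : IsSubmersion (𝓡 k) (𝓡 n) sU
  pullback_t : PullbackModule (𝓡 k) (𝓡 n) tU F
    = setAddVF (𝓡 k) (KerGammaC (𝓡 k) (𝓡 n) tU) (KerGammaC (𝓡 k) (𝓡 n) sU)
  pullback_s : PullbackModule (𝓡 k) (𝓡 n) sU F
    = setAddVF (𝓡 k) (KerGammaC (𝓡 k) (𝓡 n) tU) (KerGammaC (𝓡 k) (𝓡 n) sU)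

section AuxToolkit

open Filter

variable {E H : Type*} [NormedAddCommGroup E] [NormedSpace ℝ E] [TopologicalSpace H]
  {I : ModelWithCorners ℝ E H}
  {M : Type*} [TopologicalSpace M] [ChartedSpace H M] [IsManifold I (⊤ : ℕ∞) M]

lemma IsSmoothVF.congr' {X Y : VectorFieldOn I M} (hX : IsSmoothVF I X)
    (h : ∀ x, Y x = X x) : IsSmoothVF I Y := by
  have hYX : Y = X := funext h
  rw [hYX]; exact hX

lemma isSmoothVF_zero : IsSmoothVF I (fun x : M => (0 : TangentSpace I x)) :=
  (0 : Cₛ^(⊤ : ℕ∞)⟮I; E, TangentSpace I⟯).contMDiff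

lemma IsSmoothVF.add' {X Y : VectorFieldOn I M} (hX : IsSmoothVF I X) (hY : IsSmoothVF I Y) :
    IsSmoothVF I (fun x => X x + Y x) :=
  (ContMDiffSection.mk (I := I) (F := E) (V := TangentSpace I) (n := (⊤ : ℕ∞)) X hX +
    ContMDiffSection.mk Y hY).contMDiff

lemma IsSmoothVF.sub' {X Y : VectorFieldOn I M} (hX : IsSmoothVF I X) (hY : IsSmoothVF I Y) :
    IsSmoothVF I (fun x => X x - Y x) :=
  (ContMDiffSection.mk (I := I) (F := E) (V := TangentSpace I) (n := (⊤ : ℕ∞)) X hX -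
    ContMDiffSection.mk Y hY).contMDiff

lemma IsSmoothFn.smulVF {f : M → ℝ} (hf : IsSmoothFn I f) {X : VectorFieldOn I M}
    (hX : IsSmoothVF I X) : IsSmoothVF I (fun x => f x • X x) := by
  intro x₀
  have hs : ContMDiffAt I 𝓘(ℝ, E) (⊤ : ℕ∞)
      (fun x => (trivializationAt E (TangentSpace I) x₀ ⟨x, X x⟩).2) x₀ :=
    (Bundle.contMDiffAt_section _).mp (hX x₀)
  apply (Bundle.contMDiffAt_section (s := fun x => f x • X x) x₀).mpr
  refine ((hf x₀).smul hs).congr_of_eventuallyEq ?_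
  refine eventually_of_mem ((trivializationAt E (TangentSpace I) x₀).open_baseSet.mem_nhds
    (FiberBundle.mem_baseSet_trivializationAt' x₀)) ?_
  intro x hx
  apply ((trivializationAt E (TangentSpace I) x₀).linear ℝ hx).2

lemma isSmoothVF_sum {ι : Type*} (s : Finset ι) (Fv : ι → VectorFieldOn I M)
    (h : ∀ i ∈ s, IsSmoothVF I (Fv i)) :
    IsSmoothVF I (fun x => ∑ i ∈ s, Fv i x) := by
  classical
  revert h
  induction s using Finset.induction_on with
  | empty =>
    intro _
    exact isSmoothVF_zero.congr' (fun x => by simp)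
  | @insert a t ha ih =>
    intro h
    refine ((h a (Finset.mem_insert_self a t)).add'
      (ih (fun i hi => h i (Finset.mem_insert_of_mem hi)))).congr' (fun x => ?_)
    rw [Finset.sum_insert ha]

end AuxToolkit

section AuxSpan

variable {E H : Type*} [NormedAddCommGroup E] [NormedSpace ℝ E] [TopologicalSpace H]
  {I : ModelWithCorners ℝ E H}
  {M : Type*} [TopologicalSpace M] [ChartedSpace H M] [IsManifold I (⊤ : ℕ∞) M]

lemma isCcSpan_congr {S : Set (VectorFieldOn I M)} {X X' : VectorFieldOn I M}
    (h : ∀ x, X x = X' x) (hX' : IsCcSpan I S X') : IsCcSpan I S X := by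
  obtain ⟨k, g, Z, hg, hZ, he⟩ := hX'
  exact ⟨k, g, Z, hg, hZ, fun x => (h x).trans (he x)⟩

lemma isCcSpan_single {S : Set (VectorFieldOn I M)} {g : M → ℝ} {Z : VectorFieldOn I M}
    (hg : IsCcFn I g) (hZ : Z ∈ S) : IsCcSpan I S (fun x => g x • Z x) :=
  ⟨1, fun _ => g, fun _ => Z, fun _ => hg, fun _ => hZ, fun x => by
    rw [Fin.sum_univ_one]⟩

lemma IsCcSpan.add'' {S : Set (VectorFieldOn I M)} {X Y : VectorFieldOn I M}
    (hX : IsCcSpan I S X) (hY : IsCcSpan I S Y) : IsCcSpan I S (fun x => X x + Y x) := by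
  obtain ⟨k₁, g₁, Z₁, hg₁, hZ₁, he₁⟩ := hX
  obtain ⟨k₂, g₂, Z₂, hg₂, hZ₂, he₂⟩ := hY
  refine ⟨k₁ + k₂, Fin.append g₁ g₂, Fin.append Z₁ Z₂, ?_, ?_, ?_⟩
  · exact Fin.addCases (fun j => by rw [Fin.append_left]; exact hg₁ j)
      (fun j => by rw [Fin.append_right]; exact hg₂ j)
  · exact Fin.addCases (fun j => by rw [Fin.append_left]; exact hZ₁ j)
      (fun j => by rw [Fin.append_right]; exact hZ₂ j)
  · intro x
    rw [Fin.sum_univ_add]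
    simp only [Fin.append_left, Fin.append_right]
    rw [he₁ x, he₂ x]

lemma isCcSpan_sum {S : Set (VectorFieldOn I M)} {ι : Type*} (s : Finset ι)
    (Fv : ι → VectorFieldOn I M) (h : ∀ i ∈ s, IsCcSpan I S (Fv i)) :
    IsCcSpan I S (fun x => ∑ i ∈ s, Fv i x) := by
  classical
  revert h
  induction s using Finset.induction_on with
  | empty =>
    intro _
    exact ⟨0, Fin.elim0, Fin.elim0, fun i => i.elim0, fun i => i.elim0, fun x => by simp⟩
  | @insert a t ha ih =>
    intro h
    refine isCcSpan_congr (fun x => ?_)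
      ((h a (Finset.mem_insert_self a t)).add''
        (ih (fun i hi => h i (Finset.mem_insert_of_mem hi))))
    rw [Finset.sum_insert ha]

end AuxSpan

section AuxCutoff

variable {d : ℕ} {M : Type*} [TopologicalSpace M]
  [ChartedSpace (EuclideanSpace ℝ (Fin d)) M] [IsManifold (𝓡 d) (⊤ : ℕ∞) M]
  [T2Space M] [SigmaCompactSpace M]

lemma isCcFn_zero : IsCcFn (𝓡 d) (fun _ : M => (0 : ℝ)) := by
  refine ⟨contMDiff_const, ?_⟩
  have : Function.support (fun _ : M => (0 : ℝ)) = ∅ := Function.support_zero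
  simp only [HasCompactSupport, tsupport, this, closure_empty]
  exact isCompact_empty

lemma exists_cutoff {K : Set M} (hK : IsCompact K) :
    ∃ h : M → ℝ, IsCcFn (𝓡 d) h ∧ Set.EqOn h 1 K := by
  haveI : LocallyCompactSpace M :=
    ChartedSpace.locallyCompactSpace (EuclideanSpace ℝ (Fin d)) M
  obtain ⟨K', hK', hKi⟩ := exists_compact_superset hK
  obtain ⟨f, hf0, hf1, -⟩ := exists_contMDiffMap_zero_one_of_isClosed (𝓡 d) (n := (⊤ : ℕ∞))
    (isOpen_interior (s := K')).isClosed_compl hK.isClosed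
    (by rw [Set.disjoint_left]; exact fun x hx hxK => hx (hKi hxK))
  refine ⟨f, ⟨f.contMDiff, ?_⟩, hf1⟩
  apply IsCompact.of_isClosed_subset hK' (isClosed_tsupport _)
  refine closure_minimal (fun x hx => ?_) hK'.isClosed
  rcases em (x ∈ interior K') with h' | h'
  · exact interior_subset h'
  · exact absurd (hf0 h') hx

end AuxCutoff

section AuxLift

set_option linter.unusedSectionVars false

variable {n m : ℕ} {U V : Type*}
  [TopologicalSpace U] [ChartedSpace (EuclideanSpace ℝ (Fin n)) U]
  [IsManifold (𝓡 n) (⊤ : ℕ∞) U] [T2Space U] [SigmaCompactSpace U]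
  [TopologicalSpace V] [ChartedSpace (EuclideanSpace ℝ (Fin m)) V]
  [IsManifold (𝓡 m) (⊤ : ℕ∞) V] [T2Space V] [SigmaCompactSpace V]

/-- Key lemma: every element of the generating set admits an exact `φ`-lift,
    constructed by gluing lifts of cut-off multiples along a compact exhaustion. -/
lemma exists_exact_lift (φ : U → V) (hφ : ContMDiff (𝓡 n) (𝓡 m) (⊤ : ℕ∞) φ)
    (F 𝒢 : Set (VectorFieldOn (𝓡 m) V)) (h𝒢 : IsGeneratingSet (𝓡 m) F 𝒢)
    (hlift : ∀ Y ∈ F, ∃ Z : VectorFieldOn (𝓡 n) U,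
      IsSmoothVF (𝓡 n) Z ∧ IsPhiRelated (𝓡 n) (𝓡 m) φ Z Y)
    (W : VectorFieldOn (𝓡 m) V) (hW : W ∈ 𝒢) :
    ∃ Z : VectorFieldOn (𝓡 n) U,
      IsSmoothVF (𝓡 n) Z ∧ IsPhiRelated (𝓡 n) (𝓡 m) φ Z W := by
  haveI : LocallyCompactSpace V :=
    ChartedSpace.locallyCompactSpace (EuclideanSpace ℝ (Fin m)) V
  set K : CompactExhaustion V := CompactExhaustion.choice V with hKdef
  choose h hh hh1 using fun j : ℕ => exists_cutoff (d := m) (K.isCompact j)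
  set p : ℕ → V → ℝ := fun j => match j with
    | 0 => h 0
    | (j' + 1) => fun x => h (j' + 1) x - h j' x with hpdef
  have hp0 : p 0 = h 0 := rfl
  have hpS : ∀ (j : ℕ) (x : V), p (j + 1) x = h (j + 1) x - h j x := fun _ _ => rfl
  have hp_smooth : ∀ j, IsSmoothFn (𝓡 m) (p j) := by
    intro j
    cases j with
    | zero => exact (hh 0).1
    | succ j' => exact ((hh (j' + 1)).1).sub ((hh j').1)
  have hCj : ∀ j, IsCompact (tsupport (p j)) := by
    intro j
    cases j with
    | zero => exact (hh 0).2
    | succ j' =>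
      apply IsCompact.of_isClosed_subset (((hh (j' + 1)).2).union ((hh j').2))
        (isClosed_tsupport _)
      refine closure_minimal (fun x hx => ?_) ((isClosed_tsupport _).union (isClosed_tsupport _))
      by_contra hc
      have h1 : x ∉ tsupport (h (j' + 1)) := fun hm => hc (Set.mem_union_left _ hm)
      have h2 : x ∉ tsupport (h j') := fun hm => hc (Set.mem_union_right _ hm)
      refine hx ?_
      rw [hpS, image_eq_zero_of_notMem_tsupport h1, image_eq_zero_of_notMem_tsupport h2, sub_zero]
  choose g hg hg1 using fun j => exists_cutoff (d := m) (hCj j)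
  have hmemF : ∀ j, (fun x => g j x • W x) ∈ F :=
    fun j => h𝒢.smul_mem (g j) (hg j) W hW
  choose Z hZsm hZrel using fun j => hlift _ (hmemF j)
  have hpg : ∀ (j : ℕ) (x : V), p j x • (g j x • W x) = p j x • W x := by
    intro j x
    rcases eq_or_ne (p j x) 0 with h0 | h0
    · rw [h0, zero_smul, zero_smul]
    · rw [show g j x = 1 from hg1 j (subset_closure h0), one_smul]
  have htel : ∀ (N : ℕ) (x : V), ∑ j ∈ Finset.range (N + 1), p j x = h N x := by
    intro N x
    induction N with
    | zero => simp [hp0]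
    | succ N ih => rw [Finset.sum_range_succ, ih, hpS]; ring
  have hpK : ∀ (j' : ℕ) {x : V}, x ∈ K j' → p (j' + 1) x = 0 := by
    intro j' x hx
    rw [hpS, show h (j' + 1) x = 1 from hh1 (j' + 1) (K.subset j'.le_succ hx),
      show h j' x = 1 from hh1 j' hx, sub_self]
  refine ⟨fun u => ∑ j ∈ Finset.range (K.find (φ u) + 1), p j (φ u) • Z j u, ?_, ?_⟩
  · -- smoothness
    intro u₀
    have hZfs : IsSmoothVF (𝓡 n) (fun u => ∑ j ∈ Finset.range (K.find (φ u₀) + 1 + 1),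
        p j (φ u) • Z j u) :=
      isSmoothVF_sum _ (fun j => fun u => p j (φ u) • Z j u)
        (fun j _ => IsSmoothFn.smulVF ((hp_smooth j).comp hφ) (hZsm j))
    have hO : IsOpen (φ ⁻¹' interior (K (K.find (φ u₀) + 1))) :=
      (hφ.continuous).isOpen_preimage _ isOpen_interior
    have hu₀ : u₀ ∈ φ ⁻¹' interior (K (K.find (φ u₀) + 1)) :=
      K.subset_interior_succ _ (K.mem_find (φ u₀))
    refine (hZfs u₀).congr_of_eventuallyEq ?_
    filter_upwards [hO.mem_nhds hu₀] with u hu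
    have hkey : ∑ j ∈ Finset.range (K.find (φ u) + 1), p j (φ u) • Z j u
        = ∑ j ∈ Finset.range (K.find (φ u₀) + 1 + 1), p j (φ u) • Z j u := by
      have hle : K.find (φ u) + 1 ≤ K.find (φ u₀) + 1 + 1 :=
        Nat.succ_le_succ (K.mem_iff_find_le.1 (interior_subset hu))
      refine Finset.sum_subset (Finset.range_subset_range.2 hle) ?_
      intro j _ hj
      have hj' : K.find (φ u) + 1 ≤ j := by
        by_contra hc
        exact hj (Finset.mem_range.2 (Nat.lt_of_not_le hc))
      obtain ⟨j'', rfl⟩ : ∃ j'', j = j'' + 1 := ⟨j - 1, by omega⟩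
      have hxK : φ u ∈ K j'' :=
        K.subset (by omega : K.find (φ u) ≤ j'') (K.mem_find (φ u))
      rw [hpK j'' hxK, zero_smul]
    show (⟨u, ∑ j ∈ Finset.range (K.find (φ u) + 1), p j (φ u) • Z j u⟩ :
        TangentBundle (𝓡 n) U) = ⟨u, _⟩
    rw [hkey]
  · -- relatedness
    intro u
    rw [map_sum]
    calc ∑ j ∈ Finset.range (K.find (φ u) + 1),
          mfderiv (𝓡 n) (𝓡 m) φ u (p j (φ u) • Z j u)
        = ∑ j ∈ Finset.range (K.find (φ u) + 1), p j (φ u) • W (φ u) := by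
          refine Finset.sum_congr rfl (fun j _ => ?_)
          rw [ContinuousLinearMap.map_smul, hZrel j u]
          exact hpg j (φ u)
      _ = (∑ j ∈ Finset.range (K.find (φ u) + 1), p j (φ u)) • W (φ u) :=
          (Finset.sum_smul).symm
      _ = h (K.find (φ u)) (φ u) • W (φ u) := by rw [htel]
      _ = W (φ u) := by
          rw [show h (K.find (φ u)) (φ u) = 1 from hh1 _ (K.mem_find (φ u)), one_smul]

end AuxLift

/-- if every element of `F` admits a `φ`-lift, then the pullback module
`φ⁻¹(F)` is the `C_c^∞(U)`-span of the smooth vector fields on `U` which are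
`φ`-related to an element of the generating set `𝒢` or to the zero vector field. -/
theorem statement_2
    {n m : ℕ} {U V : Type*}
    [TopologicalSpace U] [ChartedSpace (EuclideanSpace ℝ (Fin n)) U]
    [IsManifold (𝓡 n) (⊤ : ℕ∞) U] [T2Space U] [SigmaCompactSpace U]
    [TopologicalSpace V] [ChartedSpace (EuclideanSpace ℝ (Fin m)) V]
    [IsManifold (𝓡 m) (⊤ : ℕ∞) V] [T2Space V] [SigmaCompactSpace V]
    (φ : U → V) (hφ : ContMDiff (𝓡 n) (𝓡 m) (⊤ : ℕ∞) φ)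
    (F 𝒢 : Set (VectorFieldOn (𝓡 m) V))
    (hF : IsCinftySubmodule (𝓡 m) F) (h𝒢 : IsGeneratingSet (𝓡 m) F 𝒢)
    (hlift : ∀ Y ∈ F, ∃ Z : VectorFieldOn (𝓡 n) U,
      IsSmoothVF (𝓡 n) Z ∧ IsPhiRelated (𝓡 n) (𝓡 m) φ Z Y) :
    PullbackModule (𝓡 n) (𝓡 m) φ F =
      {X | IsCcSpan (𝓡 n)
        {Z | IsSmoothVF (𝓡 n) Z ∧
          ((∃ Y ∈ 𝒢, IsPhiRelated (𝓡 n) (𝓡 m) φ Z Y) ∨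
            IsPhiRelated (𝓡 n) (𝓡 m) φ Z (fun _ => 0))} X} := by
  ext X
  simp only [Set.mem_setOf_eq]
  constructor
  · -- `φ⁻¹(F)` is contained in the span
    rintro ⟨hXC, k, f, Y, hf, hYF, hrel⟩
    choose kk gg WW hgg hWW hYeq using fun i : Fin k => h𝒢.spans (Y i) (hYF i)
    choose Zl hZlsm hZlrel using fun (i : Fin k) (j : Fin (kk i)) =>
      exists_exact_lift φ hφ F 𝒢 h𝒢 hlift (WW i j) (hWW i j)
    have hc : ∀ (i : Fin k) (j : Fin (kk i)),
        IsCcFn (𝓡 n) (fun u => f i u * gg i j (φ u)) := by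
      intro i j
      exact ⟨((hf i).1).mul (((hgg i j).1).comp hφ), ((hf i).2).mul_right⟩
    have hX'rel : ∀ u, mfderiv (𝓡 n) (𝓡 m) φ u
        (∑ i, ∑ j, (f i u * gg i j (φ u)) • Zl i j u)
        = ∑ i, ∑ j, (f i u * gg i j (φ u)) • WW i j (φ u) := by
      intro u
      rw [map_sum]
      refine Finset.sum_congr rfl (fun i _ => ?_)
      rw [map_sum]
      refine Finset.sum_congr rfl (fun j _ => ?_)
      rw [ContinuousLinearMap.map_smul, hZlrel i j u]
    have hDrel0 : ∀ u, mfderiv (𝓡 n) (𝓡 m) φ u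
        (X u - ∑ i, ∑ j, (f i u * gg i j (φ u)) • Zl i j u) = 0 := by
      intro u
      rw [map_sub, hrel u, hX'rel u, sub_eq_zero]
      refine Finset.sum_congr rfl (fun i _ => ?_)
      rw [hYeq i (φ u), Finset.smul_sum]
      refine Finset.sum_congr rfl (fun j _ => ?_)
      rw [smul_smul]
    have hDsm : IsSmoothVF (𝓡 n)
        (fun u => X u - ∑ i, ∑ j, (f i u * gg i j (φ u)) • Zl i j u) :=
      hXC.1.sub' (isSmoothVF_sum _ (fun i => fun u => ∑ j, (f i u * gg i j (φ u)) • Zl i j u)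
        (fun i _ => isSmoothVF_sum _ (fun j => fun u => (f i u * gg i j (φ u)) • Zl i j u)
          (fun j _ => IsSmoothFn.smulVF (hc i j).1 (hZlsm i j))))
    set C : Set U := suppVF (𝓡 n) X ∪ ⋃ i, ⋃ j, tsupport (fun u => f i u * gg i j (φ u))
      with hCdef
    have hCcpt : IsCompact C :=
      (hXC.2).union (isCompact_iUnion fun i => isCompact_iUnion fun j => (hc i j).2)
    obtain ⟨χ, hχ, hχ1⟩ := exists_cutoff (d := n) hCcpt
    have hsupp : ∀ u, (X u - ∑ i, ∑ j, (f i u * gg i j (φ u)) • Zl i j u) ≠ 0 → u ∈ C := by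
      intro u
      contrapose!
      intro hc'
      have hX0 : X u = 0 := by
        by_contra hX0
        exact hc' (Set.mem_union_left _ (subset_closure hX0))
      have hc0 : ∀ (i : Fin k) (j : Fin (kk i)), f i u * gg i j (φ u) = 0 := by
        intro i j
        have hnm : u ∉ tsupport (fun u => f i u * gg i j (φ u)) := fun hm =>
          hc' (Set.mem_union_right _ (Set.mem_iUnion.2 ⟨i, Set.mem_iUnion.2 ⟨j, hm⟩⟩))
        exact image_eq_zero_of_notMem_tsupport (f := fun u => f i u * gg i j (φ u)) hnm
      rw [hX0, Finset.sum_eq_zero (fun i _ => Finset.sum_eq_zero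
        (fun j _ => by rw [hc0 i j, zero_smul])), sub_zero]
    refine isCcSpan_congr
      (X' := fun u => (∑ i, ∑ j, (f i u * gg i j (φ u)) • Zl i j u)
        + χ u • (X u - ∑ i, ∑ j, (f i u * gg i j (φ u)) • Zl i j u))
      (fun u => ?_) (IsCcSpan.add'' ?_ ?_)
    · beta_reduce
      rcases eq_or_ne (X u - ∑ i, ∑ j, (f i u * gg i j (φ u)) • Zl i j u) 0 with h0 | h0
      · rw [h0, smul_zero, add_zero]
        exact sub_eq_zero.mp h0
      · rw [show χ u = 1 from hχ1 (hsupp u h0), one_smul]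
        abel
    · exact isCcSpan_sum Finset.univ
        (fun i => fun u => ∑ j, (f i u * gg i j (φ u)) • Zl i j u)
        (fun i _ => isCcSpan_sum Finset.univ
          (fun j => fun u => (f i u * gg i j (φ u)) • Zl i j u)
          (fun j _ => isCcSpan_single (hc i j)
            ⟨hZlsm i j, Or.inl ⟨WW i j, hWW i j, hZlrel i j⟩⟩))
    · exact isCcSpan_single hχ ⟨hDsm, Or.inr hDrel0⟩
  · -- the span is contained in `φ⁻¹(F)`
    rintro ⟨k, g, Z, hg, hZS, hXeq⟩
    have hXsm : IsSmoothVF (𝓡 n) X :=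
      IsSmoothVF.congr' (isSmoothVF_sum Finset.univ (fun i => fun u => g i u • Z i u)
        (fun i _ => IsSmoothFn.smulVF (hg i).1 (hZS i).1)) hXeq
    have hsub : suppVF (𝓡 n) X ⊆ ⋃ i, tsupport (g i) := by
      refine closure_minimal (fun x hx => ?_)
        (isClosed_iUnion_of_finite fun i => isClosed_tsupport _)
      by_contra hcx
      simp only [Set.mem_iUnion, not_exists] at hcx
      refine hx ?_
      rw [hXeq x]
      exact Finset.sum_eq_zero fun i _ => by
        rw [image_eq_zero_of_notMem_tsupport (hcx i), zero_smul]
    have hXcpt : IsCptSuppVF (𝓡 n) X :=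
      IsCompact.of_isClosed_subset (isCompact_iUnion fun i => (hg i).2) isClosed_closure hsub
    refine ⟨⟨hXsm, hXcpt⟩, ?_⟩
    by_cases hFne : F.Nonempty
    · obtain ⟨Y₀, hY₀⟩ := hFne
      have key : ∀ i : Fin k, ∃ (fi : U → ℝ) (Yi : VectorFieldOn (𝓡 m) V),
          IsCcFn (𝓡 n) fi ∧ Yi ∈ F ∧
          ∀ u, g i u • mfderiv (𝓡 n) (𝓡 m) φ u (Z i u) = fi u • Yi (φ u) := by
        intro i
        rcases (hZS i).2 with ⟨W, hW𝒢, hrelW⟩ | hrel0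
        · obtain ⟨h', hh', hh1'⟩ := exists_cutoff (d := m)
            (((hg i).2).image hφ.continuous)
          refine ⟨g i, fun x => h' x • W x, hg i, h𝒢.smul_mem h' hh' W hW𝒢, fun u => ?_⟩
          show g i u • mfderiv (𝓡 n) (𝓡 m) φ u (Z i u) = g i u • (h' (φ u) • W (φ u))
          rcases eq_or_ne (g i u) 0 with h0 | h0
          · rw [h0, zero_smul, zero_smul]
          · have hmem : φ u ∈ φ '' tsupport (g i) := ⟨u, subset_closure h0, rfl⟩
            rw [hrelW u, show h' (φ u) = 1 from hh1' hmem, one_smul]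
        · refine ⟨fun _ => 0, fun x => (0 : ℝ) • Y₀ x, isCcFn_zero,
            hF.smul_mem (fun _ => 0) contMDiff_const Y₀ hY₀, fun u => ?_⟩
          show g i u • mfderiv (𝓡 n) (𝓡 m) φ u (Z i u) = (0 : ℝ) • ((0 : ℝ) • Y₀ (φ u))
          rw [hrel0 u]
          simp
      choose fi Yi hfi hYiF hkey using key
      refine ⟨k, fi, Yi, hfi, hYiF, fun u => ?_⟩
      rw [hXeq u, map_sum]
      exact Finset.sum_congr rfl fun i _ => by
        rw [ContinuousLinearMap.map_smul]
        exact hkey i u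
    · have hallinr : ∀ i : Fin k, IsPhiRelated (𝓡 n) (𝓡 m) φ (Z i) (fun _ => 0) := by
        intro i
        rcases (hZS i).2 with ⟨W, hW𝒢, -⟩ | hrel0
        · exact absurd ⟨_, h𝒢.smul_mem (fun _ => 0) isCcFn_zero W hW𝒢⟩ hFne
        · exact hrel0
      refine ⟨0, Fin.elim0, Fin.elim0, fun i => i.elim0, fun i => i.elim0, fun u => ?_⟩
      rw [hXeq u, map_sum]
      rw [Finset.sum_eq_zero fun i _ => by
        rw [ContinuousLinearMap.map_smul, hallinr i u]; simp]
      simp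


end
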